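/- Let a > 0 and let k : [0, ∞) → ℝ be continuous with k(s) ≤ −a² for all s, let F be the solution of F'' + kF = 0 with F(0) = 0, F'(0) = 1, and set G(s) = ∫₀ˢ F(t) dt. Then G(s) ≤ F(s)/a for all s ≥ 0. -/

import Mathlib

open Set Real Filter Topology intervalIntegral

/-- Inequality (10) in the paper: if `k ≤ -a² < 0` and `F'' + kF = 0`, `F(0)=0`,
`F'(0)=1`, with `G(s) = ∫₀ˢ F`, then `G(s) ≤ F(s)/a` for all `s ≥ 0`. -/
theorem stmt_15 (a : ℝ) (ha : 0 < a) (k F F' F'' : ℝ → ℝ)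
    (hk_cont : ContinuousOn k (Set.Ici 0))
    (hk_le : ∀ s ∈ Set.Ici (0 : ℝ), k s ≤ -a ^ 2)
    (hF' : ∀ s ∈ Set.Ici (0 : ℝ), HasDerivWithinAt F (F' s) (Set.Ici 0) s)
    (hF'' : ∀ s ∈ Set.Ici (0 : ℝ), HasDerivWithinAt F' (F'' s) (Set.Ici 0) s)
    (hF''_cont : ContinuousOn F'' (Set.Ici 0))
    (hODE : ∀ s ∈ Set.Ici (0 : ℝ), F'' s + k s * F s = 0)
    (hF0 : F 0 = 0) (hF'0 : F' 0 = 1)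
    (G : ℝ → ℝ) (hG : ∀ s, G s = ∫ t in (0 : ℝ)..s, F t) :
    ∀ s ∈ Set.Ici (0 : ℝ), G s ≤ F s / a := by
  have hFc : ContinuousOn F (Set.Ici 0) := fun s hs => (hF' s hs).continuousWithinAt
  have hF'c : ContinuousOn F' (Set.Ici 0) := fun s hs => (hF'' s hs).continuousWithinAt
  -- F'' equals -k * F
  have hODE' : ∀ s ∈ Set.Ici (0 : ℝ), F'' s = -(k s * F s) := by
    intro s hs; have := hODE s hs; linarith
  -- Step 1 : F' ≥ 1 on [0, ∞)
  have key : ∀ s ∈ Set.Ici (0 : ℝ), 1 ≤ F' s := by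
    by_contra hcon
    push_neg at hcon
    obtain ⟨s₁, hs₁, hs₁'⟩ := hcon
    set B : Set ℝ := {s | 0 ≤ s ∧ F' s < 1} with hB
    have hBne : B.Nonempty := ⟨s₁, hs₁, hs₁'⟩
    have hBbdd : BddBelow B := ⟨0, fun x hx => hx.1⟩
    set c := sInf B with hc
    have hc0 : 0 ≤ c := le_csInf hBne fun x hx => hx.1
    -- on [0, c), F' ≥ 1
    have h1 : ∀ t ∈ Set.Ico (0 : ℝ) c, 1 ≤ F' t := by
      intro t ht
      by_contra h
      push_neg at h
      exact absurd (csInf_le hBbdd ⟨ht.1, h⟩) (not_le.mpr ht.2)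
    -- at c, F' c ≥ 1
    have h2 : 1 ≤ F' c := by
      rcases eq_or_lt_of_le hc0 with h | h
      · rw [← h, hF'0]
      · have hcw : ContinuousWithinAt F' (Set.Ico 0 c) c :=
          (hF'c c hc0).mono (fun x hx => hx.1)
        have hne : (𝓝[Set.Ico (0:ℝ) c] c).NeBot := by
          rw [← mem_closure_iff_nhdsWithin_neBot, closure_Ico h.ne]
          exact ⟨hc0, le_refl c⟩
        exact ge_of_tendsto hcw (eventually_nhdsWithin_of_forall h1)
    -- F' positive on a right neighborhood of c
    have h3 : ∃ u, c < u ∧ ∀ t ∈ Set.Ico c u, 0 ≤ F' t := by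
      have hcw : ContinuousWithinAt F' (Set.Ici c) c :=
        (hF'c c hc0).mono (Set.Ici_subset_Ici.mpr hc0)
      have hev : ∀ᶠ t in 𝓝[Set.Ici c] c, 0 < F' t :=
        hcw.eventually (eventually_gt_nhds (show (0:ℝ) < F' c by linarith))
      have hev' : {t : ℝ | 0 < F' t} ∈ 𝓝[Set.Ici c] c := hev
      obtain ⟨u, hu, hsub⟩ := (mem_nhdsGE_iff_exists_Ico_subset' (show c < c + 1 by linarith)).mp hev'
      exact ⟨u, hu, fun t ht => (hsub ht).le⟩
    obtain ⟨u, hcu, hu⟩ := h3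
    -- pick b ∈ B with b < u
    obtain ⟨b, hbB, hbu⟩ := exists_lt_of_csInf_lt hBne hcu
    have hcb : c ≤ b := csInf_le hBbdd hbB
    have hb0 : 0 ≤ b := hbB.1
    -- F' ≥ 0 on [0, b]
    have hF'nn : ∀ t ∈ Set.Icc (0 : ℝ) b, 0 ≤ F' t := by
      intro t ht
      rcases lt_or_ge t c with h | h
      · exact le_trans zero_le_one (h1 t ⟨ht.1, h⟩)
      · exact hu t ⟨h, lt_of_le_of_lt ht.2 hbu⟩
    -- F monotone on [0, b], hence F ≥ 0 there
    have hFmono : MonotoneOn F (Set.Icc 0 b) := by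
      apply monotoneOn_of_hasDerivWithinAt_nonneg (convex_Icc 0 b)
        (hFc.mono (Set.Icc_subset_Ici_self)) (f' := F')
      · intro x hx
        rw [interior_Icc] at hx
        have hsub : interior (Set.Icc (0:ℝ) b) ⊆ Set.Ici 0 := by
          rw [interior_Icc]; exact fun y hy => le_of_lt hy.1
        exact (hF' x (le_of_lt hx.1)).mono hsub
      · intro x hx
        rw [interior_Icc] at hx
        exact hF'nn x ⟨hx.1.le, hx.2.le⟩
    have hFnn : ∀ t ∈ Set.Icc (0 : ℝ) b, 0 ≤ F t := by
      intro t ht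
      have := hFmono (Set.left_mem_Icc.mpr hb0) ht ht.1
      rwa [hF0] at this
    -- hence F'' ≥ 0 on [0, b], so F' monotone there
    have hF''nn : ∀ t ∈ Set.Icc (0 : ℝ) b, 0 ≤ F'' t := by
      intro t ht
      rw [hODE' t ht.1]
      have hk := hk_le t ht.1
      have hF := hFnn t ht
      nlinarith [sq_nonneg a]
    have hF'mono : MonotoneOn F' (Set.Icc 0 b) := by
      apply monotoneOn_of_hasDerivWithinAt_nonneg (convex_Icc 0 b)
        (hF'c.mono (Set.Icc_subset_Ici_self)) (f' := F'')
      · intro x hx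
        rw [interior_Icc] at hx
        have hsub : interior (Set.Icc (0:ℝ) b) ⊆ Set.Ici 0 := by
          rw [interior_Icc]; exact fun y hy => le_of_lt hy.1
        exact (hF'' x (le_of_lt hx.1)).mono hsub
      · intro x hx
        rw [interior_Icc] at hx
        exact hF''nn x ⟨hx.1.le, hx.2.le⟩
    have : 1 ≤ F' b := by
      have := hF'mono (Set.left_mem_Icc.mpr hb0) (Set.right_mem_Icc.mpr hb0) hb0
      rwa [hF'0] at this
    exact absurd hbB.2 (not_lt.mpr this)
  -- F is nonnegative on [0, ∞)
  have hFmono : MonotoneOn F (Set.Ici 0) := by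
    apply monotoneOn_of_hasDerivWithinAt_nonneg (convex_Ici 0) hFc (f' := F')
    · intro x hx
      rw [interior_Ici] at hx
      have hsub : interior (Set.Ici (0:ℝ)) ⊆ Set.Ici 0 := interior_subset
      exact (hF' x (Set.mem_Ici.mpr hx.le)).mono hsub
    · intro x hx
      rw [interior_Ici] at hx
      exact le_trans zero_le_one (key x (Set.mem_Ici.mpr hx.le))
  have hFnn : ∀ s ∈ Set.Ici (0 : ℝ), 0 ≤ F s := by
    intro s hs
    have := hFmono (Set.self_mem_Ici) hs hs
    rwa [hF0] at this
  -- Step 2 : Q = exp(a s) (F' s - a F s) is monotone on [0, ∞), Q 0 = 1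
  set Q : ℝ → ℝ := fun s => Real.exp (a * s) * (F' s - a * F s) with hQdef
  have hQmono : MonotoneOn Q (Set.Ici 0) := by
    apply monotoneOn_of_hasDerivWithinAt_nonneg (convex_Ici 0)
      (f' := fun x => Real.exp (a * x) * (F'' x - a ^ 2 * F x))
    · exact ((Real.continuous_exp.comp (continuous_const.mul continuous_id)).continuousOn).mul
        (hF'c.sub (continuousOn_const.mul hFc))
    · intro x hx
      rw [interior_Ici] at hx ⊢
      have hxI : x ∈ Set.Ici (0:ℝ) := Set.mem_Ici.mpr hx.le
      have he : HasDerivAt (fun s => Real.exp (a * s)) (Real.exp (a * x) * a) x := by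
        exact ((Real.hasDerivAt_exp (a * x)).comp x ((hasDerivAt_id x).const_mul a)).congr_deriv (by simp)
      have hmemIci : Set.Ici (0:ℝ) ∈ 𝓝 x := Ici_mem_nhds hx
      have hFd : HasDerivAt F (F' x) x := (hF' x hxI).hasDerivAt hmemIci
      have hF'd : HasDerivAt F' (F'' x) x := (hF'' x hxI).hasDerivAt hmemIci
      have hin : HasDerivAt (fun s => F' s - a * F s) (F'' x - a * F' x) x :=
        hF'd.sub (hFd.const_mul a)
      have := he.mul hin
      have heq : Real.exp (a * x) * a * (F' x - a * F x) +
          Real.exp (a * x) * (F'' x - a * F' x)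
          = Real.exp (a * x) * (F'' x - a ^ 2 * F x) := by ring
      rw [heq] at this
      exact this.hasDerivWithinAt
    · intro x hx
      rw [interior_Ici] at hx
      have hxI : x ∈ Set.Ici (0:ℝ) := Set.mem_Ici.mpr hx.le
      have h1 : a ^ 2 * F x ≤ F'' x := by
        rw [hODE' x hxI]
        have := hk_le x hxI
        nlinarith [hFnn x hxI]
      have := Real.exp_pos (a * x)
      nlinarith
  have hQ0 : Q 0 = 1 := by
    simp [hQdef, hF'0, hF0]
  have hP : ∀ s ∈ Set.Ici (0 : ℝ), 0 ≤ F' s - a * F s := by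
    intro s hs
    have h1 : (1:ℝ) ≤ Real.exp (a * s) * (F' s - a * F s) := by
      rw [← hQ0]; exact hQmono Set.self_mem_Ici hs hs
    have h2 := Real.exp_pos (a * s)
    nlinarith
  -- Step 3 : H = F - a * ∫₀ˢ F is monotone on [0, ∞)
  set Gi : ℝ → ℝ := fun s => ∫ t in (0:ℝ)..s, F t with hGi
  have hInt : ∀ x : ℝ, 0 ≤ x → IntervalIntegrable F MeasureTheory.volume 0 x := by
    intro x hx
    have : ContinuousOn F (Set.uIcc 0 x) := by
      rw [Set.uIcc_of_le hx]; exact hFc.mono Set.Icc_subset_Ici_self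
    exact this.intervalIntegrable
  have hGd : ∀ x ∈ Set.Ici (0:ℝ), HasDerivWithinAt Gi (F x) (Set.Ici 0) x := by
    intro x hx
    rcases eq_or_lt_of_le (Set.mem_Ici.mp hx : (0:ℝ) ≤ x) with h | h
    · -- x = 0, use right-derivative version
      subst h
      apply intervalIntegral.integral_hasDerivWithinAt_right (hInt 0 le_rfl)
        (t := Set.Ioi 0)
      · exact ⟨Set.Ioi 0, self_mem_nhdsWithin,
          (hFc.mono Set.Ioi_subset_Ici_self).aestronglyMeasurable measurableSet_Ioi⟩
      · exact (hFc 0 Set.self_mem_Ici).mono Set.Ioi_subset_Ici_self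
    · have hmemIci : Set.Ici (0:ℝ) ∈ 𝓝 x := Ici_mem_nhds h
      have hca : ContinuousAt F x := (hFc x hx).continuousAt hmemIci
      have : HasDerivAt Gi (F x) x := by
        apply intervalIntegral.integral_hasDerivAt_right (hInt x h.le) _ hca
        exact ⟨Set.Ioi 0, Ioi_mem_nhds h,
          (hFc.mono Set.Ioi_subset_Ici_self).aestronglyMeasurable measurableSet_Ioi⟩
      exact this.hasDerivWithinAt
  set H : ℝ → ℝ := fun s => F s - a * Gi s with hHdef
  have hHmono : MonotoneOn H (Set.Ici 0) := by
    apply monotoneOn_of_hasDerivWithinAt_nonneg (convex_Ici 0)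
      (f' := fun s => F' s - a * F s)
    · exact hFc.sub (continuousOn_const.mul
        (fun x hx => (hGd x hx).continuousWithinAt))
    · intro x hx
      rw [interior_Ici] at hx ⊢
      exact (((hF' x (Set.mem_Ici.mpr hx.le)).sub ((hGd x (Set.mem_Ici.mpr hx.le)).const_mul a)).mono Set.Ioi_subset_Ici_self)
    · intro x hx
      rw [interior_Ici] at hx
      exact hP x (Set.mem_Ici.mpr hx.le)
  intro s hs
  have hH0 : H 0 = 0 := by
    simp [hHdef, hGi, hF0]
  have : 0 ≤ H s := by
    rw [← hH0]; exact hHmono Set.self_mem_Ici hs hs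
  have hGs : G s = Gi s := hG s
  rw [hGs, le_div_iff₀ ha]
  simp only [hHdef] at this
  nlinarith
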